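/- arXiv:2204.10660 — 12 statements merged into one kernel-verified Lean document; each statement's English description precedes it below -/
import Mathlib

section
/- If fₙ converges I*-α-uniformly equally to the zero function, then fₙ² converges I*-α-uniformly equally to the zero function. -/
open Filter

/-- An admissible ideal on ℕ: closed under finite unions and subsets,
and contains all singletons. -/
structure AdmissibleIdeal : Type where
  sets : Set (Set ℕ)
  union_mem : ∀ {A B : Set ℕ}, A ∈ sets → B ∈ sets → A ∪ B ∈ sets
  subset_mem : ∀ {A B : Set ℕ}, A ∈ sets → B ⊆ A → B ∈ sets
  singleton_mem : ∀ n : ℕ, {n} ∈ sets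

/-- The associated filter F(I) = { ℕ \ A : A ∈ I }. -/
def AdmissibleIdeal.dualFilter (I : AdmissibleIdeal) : Set (Set ℕ) :=
  {M | Mᶜ ∈ I.sets}

/-- (xₙ)_{n ∈ M} converges to x. -/
def ConvAlongTo {X : Type*} [MetricSpace X] (M : Set ℕ) (xs : ℕ → X) (x : X) : Prop :=
  ∀ δ > 0, ∃ N : ℕ, ∀ n ≥ N, n ∈ M → dist (xs n) x < δ

/-- (ε, M, n₀) witnesses that |{n ∈ M : |fₙ(xₙ) − g(x)| ≥ εₙ}| ≤ n₀ for every x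
and every sequence (xₙ)_{n∈M} → x. -/
def WitnessUE {X : Type*} [MetricSpace X]
    (f : ℕ → X → ℝ) (g : X → ℝ) (ε : ℕ → ℝ) (M : Set ℕ) (n₀ : ℕ) : Prop :=
  ∀ x : X, ∀ xs : ℕ → X, ConvAlongTo M xs x →
    ({n | n ∈ M ∧ ε n ≤ |f n (xs n) - g x|}).encard ≤ (n₀ : ℕ∞)

/-- I*-α-uniform equal convergence. -/
def IStarAlphaUE (I : AdmissibleIdeal) {X : Type*} [MetricSpace X]
    (f : ℕ → X → ℝ) (g : X → ℝ) : Prop :=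
  ∃ ε : ℕ → ℝ, (∀ n, 0 < ε n) ∧ Tendsto ε atTop (nhds 0) ∧
    ∃ M ∈ I.dualFilter, ∃ n₀ : ℕ, WitnessUE f g ε M n₀

/-- I*-α-strong uniform equal convergence. -/
def IStarAlphaSUE (I : AdmissibleIdeal) {X : Type*} [MetricSpace X]
    (f : ℕ → X → ℝ) (g : X → ℝ) : Prop :=
  ∃ ε : ℕ → ℝ, (∀ n, 0 < ε n) ∧ Summable ε ∧
    ∃ M ∈ I.dualFilter, ∃ n₀ : ℕ, WitnessUE f g ε M n₀

theorem ue_sq_zero (I : AdmissibleIdeal) {X : Type*} [MetricSpace X]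
    (f : ℕ → X → ℝ)
    (h : IStarAlphaUE I f (fun _ => 0)) :
    IStarAlphaUE I (fun n x => (f n x) ^ 2) (fun _ => 0) := by
  obtain ⟨ε, hpos, htend, M, hM, n₀, hW⟩ := h
  refine ⟨fun n => ε n ^ 2, fun n => pow_pos (hpos n) 2, ?_, M, hM, n₀, ?_⟩
  · have := htend.mul htend
    simpa [pow_two] using this
  · intro x xs hxs
    have key : {n | n ∈ M ∧ ε n ^ 2 ≤ |f n (xs n) ^ 2 - 0|}
        = {n | n ∈ M ∧ ε n ≤ |f n (xs n) - 0|} := by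
      ext n
      simp only [Set.mem_setOf_eq, sub_zero, abs_pow]
      constructor
      · rintro ⟨hn, hle⟩
        exact ⟨hn, le_of_pow_le_pow_left₀ two_ne_zero (abs_nonneg _) hle⟩
      · rintro ⟨hn, hle⟩
        exact ⟨hn, pow_le_pow_left₀ (hpos n).le hle 2⟩
    rw [key]
    exact hW x xs hxs
end

section
/- If fₙ converges I*-α-uniformly equally to f, gₙ converges I*-α-uniformly equally to g, and a, b ∈ ℝ, then a·fₙ + b·gₙ converges I*-α-uniformly equally to a·f + b·g. -/
open Filter

theorem ue_linear (I : AdmissibleIdeal) {X : Type*} [MetricSpace X]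
    (f g : ℕ → X → ℝ) (F G : X → ℝ) (a b : ℝ)
    (hf : IStarAlphaUE I f F) (hg : IStarAlphaUE I g G) :
    IStarAlphaUE I (fun n x => a * f n x + b * g n x) (fun x => a * F x + b * G x) := by
  classical
  obtain ⟨ε₁, hε₁pos, hε₁lim, M₁, hM₁, n₁, hw₁⟩ := hf
  obtain ⟨ε₂, hε₂pos, hε₂lim, M₂, hM₂, n₂, hw₂⟩ := hg
  refine ⟨fun n => (|a| + 1) * ε₁ n + (|b| + 1) * ε₂ n, fun n => by have := hε₁pos n; have := hε₂pos n; positivity, ?_,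
    M₁ ∩ M₂, ?_, n₁ + n₂, ?_⟩
  · have := (hε₁lim.const_mul (|a| + 1)).add (hε₂lim.const_mul (|b| + 1))
    simpa using this
  · show (M₁ ∩ M₂)ᶜ ∈ I.sets
    rw [Set.compl_inter]
    exact I.union_mem hM₁ hM₂
  · intro x xs hxs
    set xs' : ℕ → X := fun n => if n ∈ M₁ ∩ M₂ then xs n else x with hxs'def
    have hconv : ∀ M' : Set ℕ, ConvAlongTo M' xs' x := by
      intro M' δ hδ
      obtain ⟨N, hN⟩ := hxs δ hδ
      refine ⟨N, fun n hn _ => ?_⟩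
      by_cases h : n ∈ M₁ ∩ M₂
      · have hx : xs' n = xs n := if_pos h
        rw [hx]; exact hN n hn h
      · have hx : xs' n = x := if_neg h
        rw [hx]; simpa using hδ
    have h₁ := hw₁ x xs' (hconv M₁)
    have h₂ := hw₂ x xs' (hconv M₂)
    have hsub : {n | n ∈ M₁ ∩ M₂ ∧ (|a| + 1) * ε₁ n + (|b| + 1) * ε₂ n ≤
          |(fun n x => a * f n x + b * g n x) n (xs n) - (fun x => a * F x + b * G x) x|} ⊆
        {n | n ∈ M₁ ∧ ε₁ n ≤ |f n (xs' n) - F x|} ∪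
        {n | n ∈ M₂ ∧ ε₂ n ≤ |g n (xs' n) - G x|} := by
      rintro n ⟨hnM, hbig⟩
      have hx' : xs' n = xs n := if_pos hnM
      by_contra hcon
      simp only [Set.mem_union, Set.mem_setOf_eq, not_or] at hcon
      push_neg at hcon
      obtain ⟨hc1, hc2⟩ := hcon
      have h1 : |f n (xs n) - F x| < ε₁ n := by
        have := hc1 hnM.1; rwa [hx'] at this; 
      have h2 : |g n (xs n) - G x| < ε₂ n := by
        have := hc2 hnM.2; rwa [hx'] at this
      simp only at hbig
      have key : |a * f n (xs n) + b * g n (xs n) - (a * F x + b * G x)| ≤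
          |a| * |f n (xs n) - F x| + |b| * |g n (xs n) - G x| := by
        have : a * f n (xs n) + b * g n (xs n) - (a * F x + b * G x) =
            a * (f n (xs n) - F x) + b * (g n (xs n) - G x) := by ring
        rw [this]
        calc _ ≤ |a * (f n (xs n) - F x)| + |b * (g n (xs n) - G x)| := abs_add_le _ _
          _ = |a| * |f n (xs n) - F x| + |b| * |g n (xs n) - G x| := by
              rw [abs_mul, abs_mul]
      have hlt : |a| * |f n (xs n) - F x| + |b| * |g n (xs n) - G x| <
          (|a| + 1) * ε₁ n + (|b| + 1) * ε₂ n := by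
        have l1 : |a| * |f n (xs n) - F x| < (|a| + 1) * ε₁ n := by
          calc |a| * |f n (xs n) - F x| ≤ |a| * ε₁ n :=
                mul_le_mul_of_nonneg_left h1.le (abs_nonneg a)
            _ < (|a| + 1) * ε₁ n := by
                have := hε₁pos n; nlinarith
        have l2 : |b| * |g n (xs n) - G x| < (|b| + 1) * ε₂ n := by
          calc |b| * |g n (xs n) - G x| ≤ |b| * ε₂ n :=
                mul_le_mul_of_nonneg_left h2.le (abs_nonneg b)
            _ < (|b| + 1) * ε₂ n := by
                have := hε₂pos n; nlinarith
        linarith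
      linarith [key.trans_lt hlt]
    calc _ ≤ _ := Set.encard_mono hsub
      _ ≤ _ + _ := Set.encard_union_le _ _
      _ ≤ (n₁ : ℕ∞) + (n₂ : ℕ∞) := add_le_add h₁ h₂
      _ = ((n₁ + n₂ : ℕ) : ℕ∞) := by push_cast; rfl
end

section
/- If f and g are bounded functions, fₙ converges I*-α-uniformly equally to f, and gₙ converges I*-α-uniformly equally to g, then fₙ·gₙ converges I*-α-uniformly equally to f·g. -/
open Filter

theorem ue_mul (I : AdmissibleIdeal) {X : Type*} [MetricSpace X]
    (f g : ℕ → X → ℝ) (F G : X → ℝ)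
    (hFb : ∃ C : ℝ, ∀ x, |F x| ≤ C) (hGb : ∃ C : ℝ, ∀ x, |G x| ≤ C)
    (hf : IStarAlphaUE I f F) (hg : IStarAlphaUE I g G) :
    IStarAlphaUE I (fun n x => f n x * g n x) (fun x => F x * G x) := by
  classical
  obtain ⟨ε, hεpos, hε0, M₁, hM₁, n₁, hW₁⟩ := hf
  obtain ⟨δ, hδpos, hδ0, M₂, hM₂, n₂, hW₂⟩ := hg
  obtain ⟨CF, hCF⟩ := hFb
  obtain ⟨CG, hCG⟩ := hGb
  set A := max CF 0 with hAdef
  set B := max CG 0 with hBdef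
  have hA0 : (0:ℝ) ≤ A := le_max_right _ _
  have hB0 : (0:ℝ) ≤ B := le_max_right _ _
  have hFA : ∀ x, |F x| ≤ A := fun x => (hCF x).trans (le_max_left _ _)
  have hGB : ∀ x, |G x| ≤ B := fun x => (hCG x).trans (le_max_left _ _)
  refine ⟨fun n => (A + ε n) * δ n + B * ε n, ?_, ?_, M₁ ∩ M₂, ?_, n₁ + n₂, ?_⟩
  · intro n
    have h1 := hεpos n
    have h2 := hδpos n
    have : 0 < (A + ε n) * δ n + B * ε n := by
      nlinarith [mul_nonneg hB0 h1.le, mul_pos h1 h2, mul_nonneg hA0 h2.le]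
    simpa using this
  · have : Tendsto (fun n => (A + ε n) * δ n + B * ε n) atTop
        (nhds ((A + 0) * 0 + B * 0)) :=
      ((tendsto_const_nhds.add hε0).mul hδ0).add (tendsto_const_nhds.mul hε0)
    simpa using this
  · show (M₁ ∩ M₂)ᶜ ∈ I.sets
    rw [Set.compl_inter]
    exact I.union_mem hM₁ hM₂
  · intro x xs hxs
    set ys : ℕ → X := fun n => if n ∈ M₂ then xs n else x with hysdef
    set zs : ℕ → X := fun n => if n ∈ M₁ then xs n else x with hzsdef
    have hys_conv : ConvAlongTo M₁ ys x := by
      intro d hd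
      obtain ⟨N, hN⟩ := hxs d hd
      refine ⟨N, fun n hn hn1 => ?_⟩
      by_cases h2 : n ∈ M₂
      · simpa [ys, h2] using hN n hn ⟨hn1, h2⟩
      · simp [ys, h2, hd]
    have hzs_conv : ConvAlongTo M₂ zs x := by
      intro d hd
      obtain ⟨N, hN⟩ := hxs d hd
      refine ⟨N, fun n hn hn2 => ?_⟩
      by_cases h1 : n ∈ M₁
      · simpa [zs, h1] using hN n hn ⟨h1, hn2⟩
      · simp [zs, h1, hd]
    have h₁ := hW₁ x ys hys_conv
    have h₂ := hW₂ x zs hzs_conv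
    have hsub : {n | n ∈ M₁ ∩ M₂ ∧
          (A + ε n) * δ n + B * ε n ≤ |f n (xs n) * g n (xs n) - F x * G x|}
        ⊆ {n | n ∈ M₁ ∧ ε n ≤ |f n (ys n) - F x|}
          ∪ {n | n ∈ M₂ ∧ δ n ≤ |g n (zs n) - G x|} := by
      rintro n ⟨⟨hn1, hn2⟩, hbig⟩
      by_contra hcon
      simp only [Set.mem_union, Set.mem_setOf_eq] at hcon
      push_neg at hcon
      obtain ⟨hc1, hc2⟩ := hcon
      have hy : ys n = xs n := by simp [ys, hn2]
      have hz : zs n = xs n := by simp [zs, hn1]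
      have hf' : |f n (xs n) - F x| < ε n := by rw [← hy]; exact hc1 hn1
      have hg' : |g n (xs n) - G x| < δ n := by rw [← hz]; exact hc2 hn2
      set a := f n (xs n)
      set b := g n (xs n)
      have key : |a * b - F x * G x| ≤ |a| * |b - G x| + |G x| * |a - F x| := by
        have h : a * b - F x * G x = a * (b - G x) + G x * (a - F x) := by ring
        rw [h]
        exact (abs_add_le _ _).trans (by rw [abs_mul, abs_mul])
      have ha : |a| ≤ A + ε n := by
        have : |a| ≤ |F x| + |a - F x| := by
          have := abs_add_le (F x) (a - F x)
          simpa using this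
        linarith [hFA x]
      have hAε : (0:ℝ) < A + ε n := by linarith [hεpos n]
      have t1 : |a| * |b - G x| < (A + ε n) * δ n :=
        mul_lt_mul' ha hg' (abs_nonneg _) hAε
      have t2 : |G x| * |a - F x| ≤ B * ε n :=
        mul_le_mul (hGB x) hf'.le (abs_nonneg _) hB0
      linarith
    calc ({n | n ∈ M₁ ∩ M₂ ∧
            (A + ε n) * δ n + B * ε n ≤ |f n (xs n) * g n (xs n) - F x * G x|}).encard
        ≤ ({n | n ∈ M₁ ∧ ε n ≤ |f n (ys n) - F x|}
            ∪ {n | n ∈ M₂ ∧ δ n ≤ |g n (zs n) - G x|}).encard := Set.encard_mono hsub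
      _ ≤ ({n | n ∈ M₁ ∧ ε n ≤ |f n (ys n) - F x|}).encard
            + ({n | n ∈ M₂ ∧ δ n ≤ |g n (zs n) - G x|}).encard := Set.encard_union_le _ _
      _ ≤ (n₁ : ℕ∞) + (n₂ : ℕ∞) := add_le_add h₁ h₂
      _ = ((n₁ + n₂ : ℕ) : ℕ∞) := by norm_cast
end

section
/- If fₙ converges I*-α-uniformly equally to f and gₙ converges I*-α-uniformly equally to g, then max(fₙ, gₙ) converges I*-α-uniformly equally to max(f, g) and min(fₙ, gₙ) converges I*-α-uniformly equally to min(f, g). -/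
open Filter

open Classical in
lemma ue_comb (I : AdmissibleIdeal) {X : Type*} [MetricSpace X]
    (f g : ℕ → X → ℝ) (F G : X → ℝ)
    (hf : IStarAlphaUE I f F) (hg : IStarAlphaUE I g G)
    (comb : ℝ → ℝ → ℝ)
    (hcomb : ∀ a b c d : ℝ, |comb a b - comb c d| ≤ |a - c| + |b - d|) :
    IStarAlphaUE I (fun n x => comb (f n x) (g n x)) (fun x => comb (F x) (G x)) := by
  obtain ⟨εf, hεf, htf, Mf, hMf, n₀f, hwf⟩ := hf
  obtain ⟨εg, hεg, htg, Mg, hMg, n₀g, hwg⟩ := hg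
  refine ⟨fun n => εf n + εg n, fun n => add_pos (hεf n) (hεg n), by
      simpa using htf.add htg, Mf ∩ Mg, ?_, n₀f + n₀g, ?_⟩
  · show (Mf ∩ Mg)ᶜ ∈ I.sets
    rw [Set.compl_inter]
    exact I.union_mem hMf hMg
  · intro x xs hconv
    set xs' : ℕ → X := fun n => if n ∈ Mf ∩ Mg then xs n else x with hxs'
    have hconv' : ∀ M : Set ℕ, ConvAlongTo M xs' x := by
      intro M δ hδ
      obtain ⟨N, hN⟩ := hconv δ hδ
      refine ⟨N, fun n hn _ => ?_⟩
      by_cases h : n ∈ Mf ∩ Mg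
      · simp only [hxs', if_pos h]; exact hN n hn h
      · simp only [hxs', if_neg h, dist_self]; exact hδ
    have h1 := hwf x xs' (hconv' Mf)
    have h2 := hwg x xs' (hconv' Mg)
    have hsub : {n | n ∈ Mf ∩ Mg ∧ εf n + εg n ≤ |comb (f n (xs n)) (g n (xs n)) - comb (F x) (G x)|}
        ⊆ {n | n ∈ Mf ∧ εf n ≤ |f n (xs' n) - F x|} ∪ {n | n ∈ Mg ∧ εg n ≤ |g n (xs' n) - G x|} := by
      rintro n ⟨hn, hle⟩
      have hx : xs' n = xs n := by simp only [hxs', if_pos hn]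
      have hle' : εf n + εg n ≤ |f n (xs n) - F x| + |g n (xs n) - G x| :=
        hle.trans (hcomb _ _ _ _)
      by_contra hc
      rw [Set.mem_union] at hc
      push_neg at hc
      obtain ⟨hc1, hc2⟩ := hc
      have l1 : |f n (xs' n) - F x| < εf n := by
        by_contra h; exact (hc1 ⟨hn.1, le_of_not_gt h⟩).elim
      have l2 : |g n (xs' n) - G x| < εg n := by
        by_contra h; exact (hc2 ⟨hn.2, le_of_not_gt h⟩).elim
      rw [hx] at l1 l2
      linarith
    calc _ ≤ _ := Set.encard_le_encard hsub
      _ ≤ _ := Set.encard_union_le _ _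
      _ ≤ (n₀f : ℕ∞) + (n₀g : ℕ∞) := add_le_add h1 h2
      _ = ((n₀f + n₀g : ℕ) : ℕ∞) := by push_cast; ring

theorem ue_max_min (I : AdmissibleIdeal) {X : Type*} [MetricSpace X]
    (f g : ℕ → X → ℝ) (F G : X → ℝ)
    (hf : IStarAlphaUE I f F) (hg : IStarAlphaUE I g G) :
    IStarAlphaUE I (fun n x => max (f n x) (g n x)) (fun x => max (F x) (G x)) ∧
    IStarAlphaUE I (fun n x => min (f n x) (g n x)) (fun x => min (F x) (G x)) := by
  constructor
  · exact ue_comb I f g F G hf hg max (fun a b c d =>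
      (abs_max_sub_max_le_max a b c d).trans (max_le (le_add_of_nonneg_right (abs_nonneg _))
        (le_add_of_nonneg_left (abs_nonneg _))))
  · exact ue_comb I f g F G hf hg min (fun a b c d =>
      (abs_min_sub_min_le_max a b c d).trans (max_le (le_add_of_nonneg_right (abs_nonneg _))
        (le_add_of_nonneg_left (abs_nonneg _))))
end

section
/- Let Φ be a lattice of real-valued functions on X (Φ contains all constant functions and is closed under pointwise max and min). Then the class Φ^{I*-α-u.e.} of all I*-α-uniform equal limits of sequences from Φ is also a lattice. -/
open Filter

/-- Φ is a lattice of functions: contains all constants and is closed under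
pointwise max and min. -/
def IsFnLattice {X : Type*} (Phi : Set (X → ℝ)) : Prop :=
  (∀ c : ℝ, (fun _ => c) ∈ Phi) ∧
  (∀ f ∈ Phi, ∀ g ∈ Phi, (fun x => max (f x) (g x)) ∈ Phi ∧ (fun x => min (f x) (g x)) ∈ Phi)

/-- The class of all I*-α-uniform equal limits of sequences from Φ. -/
def ueClosure (I : AdmissibleIdeal) {X : Type*} [MetricSpace X]
    (Phi : Set (X → ℝ)) : Set (X → ℝ) :=
  {f | ∃ fs : ℕ → (X → ℝ), (∀ n, fs n ∈ Phi) ∧ IStarAlphaUE I fs f}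

lemma ueClosure_op (I : AdmissibleIdeal) {X : Type*} [MetricSpace X]
    (Phi : Set (X → ℝ)) (op : ℝ → ℝ → ℝ)
    (hop : ∀ a b c d : ℝ, |op a b - op c d| ≤ max |a - c| |b - d|)
    (hcl : ∀ p ∈ Phi, ∀ q ∈ Phi, (fun x => op (p x) (q x)) ∈ Phi)
    {f g : X → ℝ} (hf : f ∈ ueClosure I Phi) (hg : g ∈ ueClosure I Phi) :
    (fun x => op (f x) (g x)) ∈ ueClosure I Phi := by
  obtain ⟨fs, hfs, ε, hε, hε0, M, hM, n₀, hW⟩ := hf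
  obtain ⟨gs, hgs, ε', hε', hε'0, M', hM', n₀', hW'⟩ := hg
  refine ⟨fun n x => op (fs n x) (gs n x), fun n => hcl _ (hfs n) _ (hgs n),
    fun n => ε n + ε' n, fun n => add_pos (hε n) (hε' n),
    by simpa using hε0.add hε'0, M ∩ M', ?_, n₀ + n₀', ?_⟩
  · show (M ∩ M')ᶜ ∈ I.sets
    rw [Set.compl_inter]
    exact I.union_mem hM hM'
  · intro x xs hxs
    classical
    set xs' : ℕ → X := fun n => if n ∈ M ∩ M' then xs n else x with hxs'def
    have hconv : ∀ (S : Set ℕ), ConvAlongTo S xs' x := by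
      intro S δ hδ
      obtain ⟨N, hN⟩ := hxs δ hδ
      refine ⟨N, fun n hn _ => ?_⟩
      by_cases h : n ∈ M ∩ M'
      · have hx : xs' n = xs n := if_pos h
        rw [hx]; exact hN n hn h
      · have hx : xs' n = x := if_neg h
        rw [hx]; simpa using hδ
    have hA := hW x xs' (hconv M)
    have hB := hW' x xs' (hconv M')
    have hsub : {n | n ∈ M ∩ M' ∧ ε n + ε' n ≤ |op (fs n (xs n)) (gs n (xs n)) - op (f x) (g x)|}
        ⊆ {n | n ∈ M ∧ ε n ≤ |fs n (xs' n) - f x|} ∪ {n | n ∈ M' ∧ ε' n ≤ |gs n (xs' n) - g x|} := by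
      rintro n ⟨hnM, hle⟩
      have hx' : xs' n = xs n := if_pos hnM
      have hb := hop (fs n (xs n)) (gs n (xs n)) (f x) (g x)
      rcases max_cases |fs n (xs n) - f x| |gs n (xs n) - g x| with ⟨hm, _⟩ | ⟨hm, _⟩
      · left
        refine ⟨hnM.1, ?_⟩
        rw [hx']
        exact le_trans (le_trans (le_add_of_nonneg_right (hε' n).le) (le_trans hle hb)) hm.le
      · right
        refine ⟨hnM.2, ?_⟩
        rw [hx']
        exact le_trans (le_trans (le_add_of_nonneg_left (hε n).le) (le_trans hle hb)) hm.le
    calc ({n | n ∈ M ∩ M' ∧ ε n + ε' n ≤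
            |op (fs n (xs n)) (gs n (xs n)) - op (f x) (g x)|}).encard
        ≤ ({n | n ∈ M ∧ ε n ≤ |fs n (xs' n) - f x|} ∪
           {n | n ∈ M' ∧ ε' n ≤ |gs n (xs' n) - g x|}).encard := Set.encard_mono hsub
      _ ≤ _ + _ := Set.encard_union_le _ _
      _ ≤ (n₀ : ℕ∞) + (n₀' : ℕ∞) := add_le_add hA hB
      _ = ((n₀ + n₀' : ℕ) : ℕ∞) := by push_cast; rfl

theorem ueClosure_lattice (I : AdmissibleIdeal) {X : Type*} [MetricSpace X]
    (Phi : Set (X → ℝ)) (hPhi : IsFnLattice Phi) :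
    IsFnLattice (ueClosure I Phi) := by
  constructor
  · intro c
    refine ⟨fun _ => (fun _ => c), fun _ => hPhi.1 c,
      fun n => 1 / (n + 1), fun n => by positivity,
      tendsto_one_div_add_atTop_nhds_zero_nat, Set.univ, ?_, 0, ?_⟩
    · show (Set.univ : Set ℕ)ᶜ ∈ I.sets
      simpa using I.subset_mem (I.singleton_mem 0) (Set.empty_subset _)
    · intro x xs _
      refine le_trans (Set.encard_mono (show _ ⊆ (∅ : Set ℕ) from ?_)) (by simp)
      rintro n ⟨-, h⟩
      exfalso
      have h0 : (0:ℝ) < 1 / ((n:ℝ)+1) := by positivity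
      simp only [sub_self, abs_zero] at h
      linarith
  · intro f hf g hg
    exact ⟨ueClosure_op I Phi max (fun a b c d => abs_max_sub_max_le_max a b c d)
        (fun p hp q hq => (hPhi.2 p hp q hq).1) hf hg,
      ueClosure_op I Phi min (fun a b c d => abs_min_sub_min_le_max a b c d)
        (fun p hp q hq => (hPhi.2 p hp q hq).2) hf hg⟩
end

section
/- If fₙ converges I*-α-strongly uniformly equally to f, then |fₙ| converges I*-α-strongly uniformly equally to |f|. -/
open Filter

theorem sue_abs (I : AdmissibleIdeal) {X : Type*} [MetricSpace X]
    (f : ℕ → X → ℝ) (F : X → ℝ)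
    (hf : IStarAlphaSUE I f F) :
    IStarAlphaSUE I (fun n x => |f n x|) (fun x => |F x|) := by
  obtain ⟨ε, hpos, hsum, M, hM, n₀, hW⟩ := hf
  refine ⟨ε, hpos, hsum, M, hM, n₀, ?_⟩
  intro x xs hconv
  refine le_trans (Set.encard_mono ?_) (hW x xs hconv)
  intro n ⟨hn, h⟩
  exact ⟨hn, h.trans (abs_abs_sub_abs_le_abs_sub _ _)⟩
end

section
/- Let Φ be a lattice of real-valued functions on X. Then the class Φ^{I*-α-s.u.e.} of all I*-α-strong uniform equal limits of sequences from Φ is also a lattice. -/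
open Filter

/-- The class of all I*-α-strong uniform equal limits of sequences from Φ. -/
def sueClosure (I : AdmissibleIdeal) {X : Type*} [MetricSpace X]
    (Phi : Set (X → ℝ)) : Set (X → ℝ) :=
  {f | ∃ fs : ℕ → (X → ℝ), (∀ n, fs n ∈ Phi) ∧ IStarAlphaSUE I fs f}

lemma key_comb (I : AdmissibleIdeal) {X : Type*} [MetricSpace X]
    (op : ℝ → ℝ → ℝ)
    (hop : ∀ a b c d : ℝ, |op a b - op c d| ≤ max |a - c| |b - d|)
    {fs gs : ℕ → X → ℝ} {f g : X → ℝ}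
    (hf : IStarAlphaSUE I fs f) (hg : IStarAlphaSUE I gs g) :
    IStarAlphaSUE I (fun n x => op (fs n x) (gs n x)) (fun x => op (f x) (g x)) := by
  classical
  obtain ⟨ε, hε, hsum, M, hM, n₀, hw⟩ := hf
  obtain ⟨ε', hε', hsum', M', hM', n₀', hw'⟩ := hg
  refine ⟨fun n => ε n + ε' n, fun n => add_pos (hε n) (hε' n), hsum.add hsum',
    M ∩ M', ?_, n₀ + n₀', ?_⟩
  · have : (M ∩ M')ᶜ = Mᶜ ∪ M'ᶜ := by simp [Set.compl_inter]
    simpa [AdmissibleIdeal.dualFilter, this] using I.union_mem hM hM'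
  · intro x xs hconv
    set xs' : ℕ → X := fun n => if n ∈ M ∩ M' then xs n else x with hxs'
    have hconv' : ∀ S : Set ℕ, ConvAlongTo S xs' x := by
      intro S δ hδ
      obtain ⟨N, hN⟩ := hconv δ hδ
      refine ⟨N, fun n hn _ => ?_⟩
      show dist (if n ∈ M ∩ M' then xs n else x) x < δ
      by_cases h : n ∈ M ∩ M'
      · rw [if_pos h]; exact hN n hn h
      · rw [if_neg h]; simpa using hδ
    have h1 := hw x xs' (hconv' M)
    have h2 := hw' x xs' (hconv' M')
    have hsub : {n | n ∈ M ∩ M' ∧ ε n + ε' n ≤ |op (fs n (xs n)) (gs n (xs n)) - op (f x) (g x)|}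
        ⊆ {n | n ∈ M ∧ ε n ≤ |fs n (xs' n) - f x|} ∪ {n | n ∈ M' ∧ ε' n ≤ |gs n (xs' n) - g x|} := by
      rintro n ⟨hnM, hle⟩
      have hx : xs' n = xs n := if_pos hnM
      have := hop (fs n (xs n)) (gs n (xs n)) (f x) (g x)
      have hle2 : ε n + ε' n ≤ max |fs n (xs n) - f x| |gs n (xs n) - g x| := le_trans hle this
      rcases le_max_iff.mp hle2 with h | h
      · exact Or.inl ⟨hnM.1, by rw [hx]; linarith [hε' n]⟩
      · exact Or.inr ⟨hnM.2, by rw [hx]; linarith [hε n]⟩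
    calc ({n | n ∈ M ∩ M' ∧ ε n + ε' n ≤ |op (fs n (xs n)) (gs n (xs n)) - op (f x) (g x)|}).encard
        ≤ _ := Set.encard_le_encard hsub
      _ ≤ _ := Set.encard_union_le _ _
      _ ≤ (n₀ : ℕ∞) + (n₀' : ℕ∞) := add_le_add h1 h2
      _ = ((n₀ + n₀' : ℕ) : ℕ∞) := by push_cast; ring

lemma const_mem_sue (I : AdmissibleIdeal) {X : Type*} [MetricSpace X]
    (Phi : Set (X → ℝ)) (hc : ∀ c : ℝ, (fun _ : X => c) ∈ Phi) (c : ℝ) :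
    (fun _ : X => c) ∈ sueClosure I Phi := by
  refine ⟨fun _ => fun _ => c, fun _ => hc c,
    fun n => (1/2 : ℝ) ^ n, fun n => by positivity, summable_geometric_two,
    Set.univ, ?_, 0, ?_⟩
  · have : (Set.univ : Set ℕ)ᶜ = ∅ := Set.compl_univ
    simpa [AdmissibleIdeal.dualFilter, this] using
      I.subset_mem (I.singleton_mem 0) (Set.empty_subset _)
  · intro x xs _
    have h0 : {n : ℕ | n ∈ Set.univ ∧ (1/2:ℝ)^n ≤ |c - c|} = ∅ := by
      ext n
      simp only [Set.mem_setOf_eq, Set.mem_univ, true_and, sub_self, abs_zero,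
        Set.mem_empty_iff_false, iff_false, not_le]
      positivity
    rw [h0]
    simp

theorem sueClosure_lattice (I : AdmissibleIdeal) {X : Type*} [MetricSpace X]
    (Phi : Set (X → ℝ)) (hPhi : IsFnLattice Phi) :
    IsFnLattice (sueClosure I Phi) := by
  obtain ⟨hconst, hmm⟩ := hPhi
  refine ⟨const_mem_sue I Phi hconst, ?_⟩
  rintro f ⟨fs, hfs, hf⟩ g ⟨gs, hgs, hg⟩
  constructor
  · exact ⟨fun n x => max (fs n x) (gs n x),
      fun n => (hmm _ (hfs n) _ (hgs n)).1,
      key_comb I max (fun a b c d => abs_max_sub_max_le_max a b c d) hf hg⟩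
  · exact ⟨fun n x => min (fs n x) (gs n x),
      fun n => (hmm _ (hfs n) _ (hgs n)).2,
      key_comb I min (fun a b c d => abs_min_sub_min_le_max a b c d) hf hg⟩
end

section
/- Let h : X → Y be a uniform homeomorphism between metric spaces, and let F = (fₙ), fₙ : X → X, and G = (gₙ), gₙ : Y → Y, be uniformly h-conjugate (gₙ ∘ h = h ∘ fₙ for all n). If F is I-exhaustive on X, then G is I-exhaustive on Y. -/
open Filter

/-- (fₙ) is I-exhaustive at x. -/
def IExhaustiveAt (I : AdmissibleIdeal) {X : Type*} [MetricSpace X]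
    (f : ℕ → X → X) (x : X) : Prop :=
  ∀ ε > 0, ∃ δ > 0, ∃ A ∈ I.sets,
    ∀ n ∉ A, ∀ y : X, dist x y < δ → dist (f n x) (f n y) < ε

theorem exhaustive_of_conjugate (I : AdmissibleIdeal)
    {X Y : Type*} [MetricSpace X] [MetricSpace Y]
    (h : X ≃ Y) (huc : UniformContinuous (h : X → Y))
    (huc' : UniformContinuous (h.symm : Y → X))
    (f : ℕ → X → X) (g : ℕ → Y → Y)
    (hconj : ∀ n : ℕ, ∀ x : X, g n (h x) = h (f n x))
    (hex : ∀ x : X, IExhaustiveAt I f x) :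
    ∀ y : Y, IExhaustiveAt I g y := by
  intro y ε hε
  obtain ⟨η, hη, hH⟩ := Metric.uniformContinuous_iff.mp huc ε hε
  obtain ⟨δ, hδ, A, hA, hF⟩ := hex (h.symm y) η hη
  obtain ⟨δ', hδ', hH'⟩ := Metric.uniformContinuous_iff.mp huc' δ hδ
  refine ⟨δ', hδ', A, hA, fun n hn y' hy' => ?_⟩
  have h1 : dist (h.symm y) (h.symm y') < δ := hH' hy'
  have h2 := hF n hn (h.symm y') h1
  have e1 : g n y = h (f n (h.symm y)) := by
    conv_lhs => rw [← h.apply_symm_apply y]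
    exact hconj n _
  have e2 : g n y' = h (f n (h.symm y')) := by
    conv_lhs => rw [← h.apply_symm_apply y']
    exact hconj n _
  rw [e1, e2]
  exact hH h2
end

section
/- Let h : X → Y be a uniform homeomorphism between metric spaces, F = (fₙ) self-maps of X and G = (gₙ) self-maps of Y uniformly h-conjugate, and f : X → X, g : Y → Y with g ∘ h = h ∘ f. Then (fₙ) converges I-uniformly to f if and only if (gₙ) converges I-uniformly to g. -/
open Filter

/-- I-uniform convergence of a sequence of self-maps. -/
def IUnifConv (I : AdmissibleIdeal) {X : Type*} [MetricSpace X]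
    (f : ℕ → X → X) (F : X → X) : Prop :=
  ∀ ε > 0, ∃ A ∈ I.sets, ∀ n ∉ A, ∀ x : X, dist (f n x) (F x) < ε

theorem iunif_iff_of_conjugate (I : AdmissibleIdeal)
    {X Y : Type*} [MetricSpace X] [MetricSpace Y]
    (h : X ≃ Y) (huc : UniformContinuous (h : X → Y))
    (huc' : UniformContinuous (h.symm : Y → X))
    (f : ℕ → X → X) (g : ℕ → Y → Y) (F : X → X) (G : Y → Y)
    (hconj : ∀ n : ℕ, ∀ x : X, g n (h x) = h (f n x))
    (hconjFG : ∀ x : X, G (h x) = h (F x)) :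
    IUnifConv I f F ↔ IUnifConv I g G := by
  rw [Metric.uniformContinuous_iff] at huc huc'
  constructor
  · intro H ε hε
    obtain ⟨δ, hδ, hδ'⟩ := huc ε hε
    obtain ⟨A, hA, hA'⟩ := H δ hδ
    refine ⟨A, hA, fun n hn y => ?_⟩
    have := hA' n hn (h.symm y)
    have e1 : g n y = h (f n (h.symm y)) := by
      conv_lhs => rw [← h.apply_symm_apply y]
      rw [hconj]
    have e2 : G y = h (F (h.symm y)) := by
      conv_lhs => rw [← h.apply_symm_apply y]
      rw [hconjFG]
    rw [e1, e2]
    exact hδ' this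
  · intro H ε hε
    obtain ⟨δ, hδ, hδ'⟩ := huc' ε hε
    obtain ⟨A, hA, hA'⟩ := H δ hδ
    refine ⟨A, hA, fun n hn x => ?_⟩
    have := hA' n hn (h x)
    have e1 : f n x = h.symm (g n (h x)) := by rw [hconj]; simp
    have e2 : F x = h.symm (G (h x)) := by rw [hconjFG]; simp
    rw [e1, e2]
    exact hδ' this
end

section
/- Let F = (fₙ) and G = (gₙ) be h-conjugate via a homeomorphism h, and f, g be h-conjugate (g ∘ h = h ∘ f). If (fₙ) converges I-pointwise to f, then (gₙ) converges I-pointwise to g. -/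
open Filter

/-- I-convergence of a sequence in a metric space. -/
def IConv (I : AdmissibleIdeal) {X : Type*} [MetricSpace X] (x : ℕ → X) (a : X) : Prop :=
  ∀ ε > 0, {n : ℕ | ε ≤ dist (x n) a} ∈ I.sets

theorem ipointwise_of_conjugate (I : AdmissibleIdeal)
    {X Y : Type*} [MetricSpace X] [MetricSpace Y]
    (h : X ≃ₜ Y)
    (f : ℕ → X → X) (g : ℕ → Y → Y) (F : X → X) (G : Y → Y)
    (hconj : ∀ n : ℕ, ∀ x : X, g n (h x) = h (f n x))
    (hconjFG : ∀ x : X, G (h x) = h (F x))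
    (hpt : ∀ x : X, IConv I (fun n => f n x) (F x)) :
    ∀ y : Y, IConv I (fun n => g n y) (G y) := by
  intro y ε hε
  set x := h.symm y with hx
  have hy : h x = y := h.apply_symm_apply y
  have hcont : Continuous (h : X → Y) := h.continuous
  obtain ⟨δ, hδ, hδimp⟩ := Metric.continuous_iff.mp hcont (F x) ε hε
  have hsub : {n : ℕ | ε ≤ dist (g n y) (G y)} ⊆ {n : ℕ | δ ≤ dist (f n x) (F x)} := by
    intro n hn
    simp only [Set.mem_setOf_eq] at hn ⊢
    by_contra hlt
    push_neg at hlt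
    have := hδimp (f n x) hlt
    rw [← hy, hconj n x, hconjFG x] at hn
    exact absurd this (not_lt.mpr hn)
  exact I.subset_mem (hpt x δ hδ) hsub
end

section
/- Let h : X → Y be a uniform homeomorphism, F = (fₙ) self-maps of X and G = (gₙ) self-maps of Y uniformly h-conjugate, and f : X → X, g : Y → Y with g ∘ h = h ∘ f. If (fₙ) I-α-converges to f at every point of X, then (gₙ) I-α-converges to g at every point of Y. -/
open Filter

/-- (fₙ) I-α-converges to F at x₀. -/
def IAlphaConvAt (I : AdmissibleIdeal) {X : Type*} [MetricSpace X]
    (f : ℕ → X → X) (F : X → X) (x₀ : X) : Prop :=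
  ∀ xs : ℕ → X, IConv I xs x₀ → IConv I (fun n => f n (xs n)) (F x₀)

lemma IConv.comp_uc (I : AdmissibleIdeal) {X Y : Type*} [MetricSpace X] [MetricSpace Y]
    {u : X → Y} (hu : UniformContinuous u) {xs : ℕ → X} {a : X}
    (hx : IConv I xs a) : IConv I (fun n => u (xs n)) (u a) := by
  intro ε hε
  obtain ⟨δ, hδ, hδ'⟩ := Metric.uniformContinuous_iff.mp hu ε hε
  refine I.subset_mem (hx δ hδ) ?_
  intro n hn
  simp only [Set.mem_setOf_eq] at hn ⊢
  by_contra hc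
  push_neg at hc
  exact absurd (hδ' hc) (not_lt.mpr hn)

theorem ialpha_of_conjugate (I : AdmissibleIdeal)
    {X Y : Type*} [MetricSpace X] [MetricSpace Y]
    (h : X ≃ Y) (huc : UniformContinuous (h : X → Y))
    (huc' : UniformContinuous (h.symm : Y → X))
    (f : ℕ → X → X) (g : ℕ → Y → Y) (F : X → X) (G : Y → Y)
    (hconj : ∀ n : ℕ, ∀ x : X, g n (h x) = h (f n x))
    (hconjFG : ∀ x : X, G (h x) = h (F x))
    (halpha : ∀ x : X, IAlphaConvAt I f F x) :
    ∀ y : Y, IAlphaConvAt I g G y := by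
  intro y ys hys
  have hx : IConv I (fun n => h.symm (ys n)) (h.symm y) := IConv.comp_uc I huc' hys
  have hfa := halpha (h.symm y) _ hx
  have := IConv.comp_uc I huc hfa
  have key : (fun n => g n (ys n)) = fun n => h (f n (h.symm (ys n))) := by
    funext n
    rw [← hconj n (h.symm (ys n)), h.apply_symm_apply]
  have hG : G y = h (F (h.symm y)) := by
    rw [← hconjFG (h.symm y), h.apply_symm_apply]
  rw [key, hG]
  exact this
end

section
/- If f is bounded on X and fₙ converges I*-α-uniformly equally to f, then fₙ² converges I*-α-uniformly equally to f². -/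
open Filter

theorem ue_sq (I : AdmissibleIdeal) {X : Type*} [MetricSpace X]
    (f : ℕ → X → ℝ) (F : X → ℝ)
    (hFb : ∃ C : ℝ, ∀ x, |F x| ≤ C)
    (hf : IStarAlphaUE I f F) :
    IStarAlphaUE I (fun n x => (f n x) ^ 2) (fun x => (F x) ^ 2) := by
  obtain ⟨C, hC⟩ := hFb
  obtain ⟨ε, hεpos, hεlim, M, hM, n₀, hW⟩ := hf
  set C' : ℝ := |C| + 1 with hC'
  have hC'pos : 0 < C' := by positivity
  have hCC' : C ≤ C' := by
    have := le_abs_self C; linarith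
  refine ⟨fun n => ε n * (ε n + 2 * C'), fun n => by
    have := hεpos n; positivity, ?_, M, hM, n₀, ?_⟩
  · have : Tendsto (fun n => ε n * (ε n + 2 * C')) atTop (nhds (0 * (0 + 2 * C'))) :=
      (hεlim.mul (hεlim.add tendsto_const_nhds))
    simpa using this
  · intro x xs hconv
    refine le_trans (Set.encard_mono ?_) (hW x xs hconv)
    intro n hn
    obtain ⟨hnM, hge⟩ := hn
    refine ⟨hnM, ?_⟩
    by_contra hlt
    push_neg at hlt
    set d : ℝ := f n (xs n) - F x with hd
    have habs : |f n (xs n) ^ 2 - F x ^ 2| = |d| * |d + 2 * F x| := by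
      rw [← abs_mul]
      congr 1
      ring
    have hdle : |d| < ε n := hlt
    have hd0 : 0 ≤ |d| := abs_nonneg d
    have h2 : |d + 2 * F x| ≤ |d| + 2 * C' := by
      calc |d + 2 * F x| ≤ |d| + |2 * F x| := abs_add_le _ _
        _ = |d| + 2 * |F x| := by rw [abs_mul]; norm_num
        _ ≤ |d| + 2 * C' := by have := hC x; linarith
    have hεn := hεpos n
    have : |d| * |d + 2 * F x| < ε n * (ε n + 2 * C') := by
      calc |d| * |d + 2 * F x| ≤ |d| * (|d| + 2 * C') :=
            mul_le_mul_of_nonneg_left h2 hd0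
        _ ≤ |d| * (ε n + 2 * C') := by nlinarith
        _ < ε n * (ε n + 2 * C') := by nlinarith
    simp only at hge
    rw [habs] at hge
    linarith
end
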